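/- In the variant Earley algorithm, a suffix item [β] is inserted in T_{j,k} if and only if there exist i, A, α, γ such that S ⇒* a_1⋯a_i A γ, (A → αβ) ∈ P, α ⇒* a_{i+1}⋯a_j, and additionally β ⇒* a_{j+1}⋯a_k. -/

import Mathlib

/-! Formalization of Earley parsing and the Nederhof–Satta variant. -/

variable {T N : Type}

/-- A context-free grammar: a start nonterminal and a set of productions. -/
structure CFG (T N : Type) where
  initial : N
  rules : Set (N × List (Symbol T N))

/-- One rewriting step of the grammar. -/
def CFG.Produces (g : CFG T N) (u v : List (Symbol T N)) : Prop :=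
  ∃ A α p q, (A, α) ∈ g.rules ∧ u = p ++ [Symbol.nonterminal A] ++ q ∧ v = p ++ α ++ q

/-- The derivation relation ⇒* (reflexive-transitive closure of rewriting). -/
def CFG.Derives (g : CFG T N) : List (Symbol T N) → List (Symbol T N) → Prop :=
  Relation.ReflTransGen g.Produces

/-- The language of the grammar: { w | S ⇒* w }. -/
def CFG.language (g : CFG T N) : Set (List T) :=
  { w | g.Derives [Symbol.nonterminal g.initial] (w.map Symbol.terminal) }

/-- `inputSlice w i j` is the substring a_{i+1}⋯a_j of `w` (0-based: w[i..j)), as symbols. -/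
def inputSlice (w : List T) (i j : ℕ) : List (Symbol T N) :=
  ((w.take j).drop i).map Symbol.terminal

/-- The least Earley table: `Earley g w A α β i j` means the dotted item
[A → α • β] is inserted in E_{i,j}. -/
inductive Earley (g : CFG T N) (w : List T) :
    N → List (Symbol T N) → List (Symbol T N) → ℕ → ℕ → Prop where
  | init {α} : (g.initial, α) ∈ g.rules → Earley g w g.initial [] α 0 0
  | predict {B α A β i j γ} : Earley g w B α (Symbol.nonterminal A :: β) i j →
      (A, γ) ∈ g.rules → Earley g w A [] γ j j
  | scan {A α a β i j} : Earley g w A α (Symbol.terminal a :: β) i j →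
      w[j]? = some a → Earley g w A (α ++ [Symbol.terminal a]) β i (j + 1)
  | complete {A α B β i k γ j} : Earley g w A α (Symbol.nonterminal B :: β) i k →
      Earley g w B γ [] k j → (B, γ) ∈ g.rules →
      Earley g w A (α ++ [Symbol.nonterminal B]) β i j

mutual
  /-- Forward part of the variant: `VarU g w β j` means suffix item [β] ∈ U_j. -/
  inductive VarU (g : CFG T N) (w : List T) : List (Symbol T N) → ℕ → Prop where
    | init {α} : (g.initial, α) ∈ g.rules → VarU g w α 0
    | predict {A β j γ} : VarU g w (Symbol.nonterminal A :: β) j →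
        (A, γ) ∈ g.rules → VarU g w γ j
    | scan {a β j} : VarU g w (Symbol.terminal a :: β) j → w[j]? = some a →
        VarU g w β (j + 1)
    | complete {B β k γ j} : VarU g w (Symbol.nonterminal B :: β) k → (B, γ) ∈ g.rules →
        VarT g w γ k j → VarU g w β j

  /-- Backward part of the variant: `VarT g w β j m` means suffix item [β] ∈ T_{j,m}. -/
  inductive VarT (g : CFG T N) (w : List T) : List (Symbol T N) → ℕ → ℕ → Prop where
    | empty {m} : VarU g w [] m → VarT g w [] m m
    | scan {a β j m} : VarU g w (Symbol.terminal a :: β) j → w[j]? = some a →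
        VarT g w β (j + 1) m → VarT g w (Symbol.terminal a :: β) j m
    | complete {B β k γ j m} : VarU g w (Symbol.nonterminal B :: β) k → (B, γ) ∈ g.rules →
        VarT g w γ k j → VarT g w β j m → VarT g w (Symbol.nonterminal B :: β) k m
end

namespace EarleyAux

variable {T N : Type} {g : CFG T N} {w : List T}

/-! ### Derivation lemmas -/

lemma produces_append_left (p : List (Symbol T N)) {u v} (h : g.Produces u v) :
    g.Produces (p ++ u) (p ++ v) := by
  obtain ⟨A, α, x, y, hr, hu, hv⟩ := h
  exact ⟨A, α, p ++ x, y, hr, by simp [hu], by simp [hv]⟩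

lemma produces_append_right (p : List (Symbol T N)) {u v} (h : g.Produces u v) :
    g.Produces (u ++ p) (v ++ p) := by
  obtain ⟨A, α, x, y, hr, hu, hv⟩ := h
  exact ⟨A, α, x, y ++ p, hr, by simp [hu], by simp [hv]⟩

lemma derives_append_left (p : List (Symbol T N)) {u v} (h : g.Derives u v) :
    g.Derives (p ++ u) (p ++ v) :=
  Relation.ReflTransGen.lift (fun l => p ++ l) (fun _ _ => produces_append_left p) _ _ h

lemma derives_append_right (p : List (Symbol T N)) {u v} (h : g.Derives u v) :
    g.Derives (u ++ p) (v ++ p) :=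
  Relation.ReflTransGen.lift (fun l => l ++ p) (fun _ _ => produces_append_right p) _ _ h

lemma derives_append {u v u' v' : List (Symbol T N)} (h : g.Derives u u')
    (h' : g.Derives v v') : g.Derives (u ++ v) (u' ++ v') :=
  (derives_append_right v h).trans (derives_append_left u' h')

lemma derives_cons (s : Symbol T N) {u v} (h : g.Derives u v) :
    g.Derives (s :: u) (s :: v) := derives_append_left [s] h

lemma produces_rule {A : N} {ρ : List (Symbol T N)} (hr : (A, ρ) ∈ g.rules) :
    g.Produces [Symbol.nonterminal A] ρ :=
  ⟨A, ρ, [], [], hr, by simp, by simp⟩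

/-! ### Step-counted derivations -/

def DerivesIn (g : CFG T N) : List (Symbol T N) → List (Symbol T N) → ℕ → Prop
  | u, v, 0 => u = v
  | u, v, n + 1 => ∃ x, g.Produces u x ∧ DerivesIn g x v n

lemma derivesIn_zero {u v : List (Symbol T N)} (h : DerivesIn g u v 0) : u = v := h

lemma derivesIn_refl (u : List (Symbol T N)) : DerivesIn g u u 0 := rfl

lemma derivesIn_trans : ∀ {m n} {u v x : List (Symbol T N)},
    DerivesIn g u v m → DerivesIn g v x n → DerivesIn g u x (m + n) := by
  intro m
  induction m with
  | zero =>
    intro n u v x h h'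
    rw [derivesIn_zero h]
    simpa using h'
  | succ m ih =>
    rintro n u v x ⟨y, hy, h⟩ h'
    rw [show m + 1 + n = (m + n) + 1 from by omega]
    exact ⟨y, hy, ih h h'⟩

lemma derives_iff_derivesIn {u v : List (Symbol T N)} :
    g.Derives u v ↔ ∃ n, DerivesIn g u v n := by
  constructor
  · intro h
    induction h using Relation.ReflTransGen.head_induction_on with
    | refl => exact ⟨0, rfl⟩
    | head hp _ ih => obtain ⟨n, hn⟩ := ih; exact ⟨n + 1, _, hp, hn⟩
  · rintro ⟨n, hn⟩
    induction n generalizing u with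
    | zero => exact (derivesIn_zero hn) ▸ Relation.ReflTransGen.refl
    | succ n ih =>
      obtain ⟨x, hx, h⟩ := hn
      exact (Relation.ReflTransGen.single hx).trans (ih h)

lemma produces_nil : ¬ g.Produces [] v := by
  rintro ⟨A, α, p, q, _, hu, _⟩
  simp at hu

lemma derivesIn_nil {v : List (Symbol T N)} {n} (h : DerivesIn g [] v n) :
    v = [] ∧ n = 0 := by
  cases n with
  | zero => exact ⟨(derivesIn_zero h).symm, rfl⟩
  | succ n => obtain ⟨x, hx, _⟩ := h; exact absurd hx produces_nil

lemma produces_terminal_cons {a : T} {u v : List (Symbol T N)}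
    (h : g.Produces (Symbol.terminal a :: u) v) :
    ∃ v', v = Symbol.terminal a :: v' ∧ g.Produces u v' := by
  obtain ⟨A, α, p, q, hr, hu, hv⟩ := h
  cases p with
  | nil => simp at hu
  | cons s p' =>
    simp only [List.cons_append, List.cons.injEq] at hu
    obtain ⟨hs, hu'⟩ := hu
    exact ⟨p' ++ α ++ q, by simp [hv, ← hs], A, α, p', q, hr, hu', rfl⟩

lemma derivesIn_terminal_cons : ∀ {n} {a : T} {u v : List (Symbol T N)},
    DerivesIn g (Symbol.terminal a :: u) v n →
    ∃ v', v = Symbol.terminal a :: v' ∧ DerivesIn g u v' n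
  | 0, a, u, v, h => ⟨u, (derivesIn_zero h).symm, rfl⟩
  | n + 1, a, u, v, ⟨x, hx, h⟩ => by
      obtain ⟨x', rfl, hx'⟩ := produces_terminal_cons hx
      obtain ⟨v', rfl, h'⟩ := derivesIn_terminal_cons h
      exact ⟨v', rfl, x', hx', h'⟩

lemma produces_nonterminal_singleton {B : N} {v : List (Symbol T N)}
    (h : g.Produces [Symbol.nonterminal B] v) : (B, v) ∈ g.rules := by
  obtain ⟨A, α, p, q, hr, hu, hv⟩ := h
  cases p with
  | nil =>
    simp only [List.nil_append, List.singleton_append, List.cons.injEq,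
      Symbol.nonterminal.injEq] at hu
    obtain ⟨rfl, rfl⟩ := hu
    simpa [hv] using hr
  | cons s p' =>
    simp only [List.cons_append, List.cons.injEq] at hu
    exact absurd hu.2 (by simp)

lemma derivesIn_split : ∀ {n} {u₁ u₂ v : List (Symbol T N)},
    DerivesIn g (u₁ ++ u₂) v n →
    ∃ v₁ v₂ n₁ n₂, v = v₁ ++ v₂ ∧ n₁ + n₂ = n ∧
      DerivesIn g u₁ v₁ n₁ ∧ DerivesIn g u₂ v₂ n₂ := by
  intro n
  induction n with
  | zero =>
    intro u₁ u₂ v h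
    exact ⟨u₁, u₂, 0, 0, (derivesIn_zero h).symm, rfl, rfl, rfl⟩
  | succ n ih =>
    rintro u₁ u₂ v ⟨x, ⟨A, α, p, q, hr, hu, hx⟩, h⟩
    rw [List.append_assoc] at hu
    rcases List.append_eq_append_iff.mp hu with ⟨a', hp, hu2⟩ | ⟨c', hu1, hq⟩
    · -- step inside u₂ : u₂ = a' ++ [nt A] ++ q
      have hx' : x = u₁ ++ (a' ++ α ++ q) := by simp [hx, hp]
      rw [hx'] at h
      obtain ⟨v₁, v₂, n₁, n₂, rfl, hn, h₁, h₂⟩ := ih h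
      refine ⟨v₁, v₂, n₁, n₂ + 1, rfl, by omega, h₁,
        ⟨a' ++ α ++ q, ⟨A, α, a', q, hr, by simpa using hu2, rfl⟩, h₂⟩⟩
    · cases c' with
      | nil =>
        -- u₁ = p, u₂ = [nt A] ++ q
        simp only [List.append_nil] at hu1
        have hx' : x = u₁ ++ (α ++ q) := by simp [hx, hu1]
        rw [hx'] at h
        obtain ⟨v₁, v₂, n₁, n₂, rfl, hn, h₁, h₂⟩ := ih h
        refine ⟨v₁, v₂, n₁, n₂ + 1, rfl, by omega, h₁,
          ⟨α ++ q, ⟨A, α, [], q, hr, by simpa using hq.symm, by simp⟩, h₂⟩⟩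
      | cons s c'' =>
        -- u₁ = p ++ [nt A] ++ c'', q = c'' ++ u₂
        simp only [List.singleton_append, List.cons_append, List.cons.injEq] at hq
        obtain ⟨hs, hq'⟩ := hq
        simp only [List.nil_append] at hq'
        have hx' : x = (p ++ α ++ c'') ++ u₂ := by simp [hx, hq']
        rw [hx'] at h
        obtain ⟨v₁, v₂, n₁, n₂, rfl, hn, h₁, h₂⟩ := ih h
        refine ⟨v₁, v₂, n₁ + 1, n₂, rfl, by omega,
          ⟨p ++ α ++ c'', ⟨A, α, p, c'', hr, by simp [hu1, ← hs], rfl⟩, h₁⟩, h₂⟩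

end EarleyAux
namespace EarleyAux2
open EarleyAux
variable {T N : Type} {g : CFG T N} {w : List T}

lemma slice_length {j k : ℕ} (h1 : j ≤ k) (h2 : k ≤ w.length) :
    (inputSlice w j k : List (Symbol T N)).length = k - j := by
  simp [inputSlice]
  omega

lemma slice_of_le {j k : ℕ} (h : k ≤ j) : (inputSlice w j k : List (Symbol T N)) = [] := by
  have : (w.take k).length ≤ j := by simp; omega
  simp [inputSlice, List.drop_eq_nil_of_le this]

lemma slice_zero (i : ℕ) : (inputSlice w 0 i : List (Symbol T N)) = (w.take i).map Symbol.terminal := by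
  simp [inputSlice]

lemma drop_take_append_drop {α : Type*} (l : List α) {i j : ℕ} (h : i ≤ j) :
    (l.take j).drop i ++ l.drop j = l.drop i := by
  conv_rhs => rw [← List.take_append_drop j l]
  rw [List.drop_append]
  congr 1
  rcases le_or_gt i (l.take j).length with hle | hlt
  · rw [Nat.sub_eq_zero_of_le hle, List.drop_zero]
  · have hl : l.length ≤ j := by simp at hlt; omega
    rw [List.drop_eq_nil_of_le hl]
    simp

lemma slice_append {i j k : ℕ} (h1 : i ≤ j) (h2 : j ≤ k) :
    (inputSlice w i j : List (Symbol T N)) ++ inputSlice w j k = inputSlice w i k := by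
  unfold inputSlice
  rw [← List.map_append]
  congr 1
  have hjk : (w.take k).take j = w.take j := by rw [List.take_take, min_eq_left h2]
  rw [← hjk]
  exact drop_take_append_drop (w.take k) h1

lemma take_append_slice {i j : ℕ} (h : i ≤ j) :
    ((w.take i).map Symbol.terminal : List (Symbol T N)) ++ inputSlice w i j
      = (w.take j).map Symbol.terminal := by
  rw [← slice_zero, ← slice_zero]
  exact slice_append (Nat.zero_le i) h

lemma slice_cons {j m : ℕ} {a : T} (hjm : j < m) (ha : w[j]? = some a) :
    (inputSlice w j m : List (Symbol T N))
      = Symbol.terminal a :: inputSlice w (j + 1) m := by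
  have hj : j < w.length := by
    by_contra hc
    rw [List.getElem?_eq_none (by omega)] at ha
    cases ha
  have hjt : j < (w.take m).length := by simp; omega
  unfold inputSlice
  rw [List.drop_eq_getElem_cons hjt]
  have hget : (w.take m)[j] = a := by
    obtain ⟨hlt, hg⟩ := List.getElem?_eq_some_iff.mp ha
    rw [List.getElem_take]
    simpa using hg
  simp [hget]

lemma slice_eq_nil {j k : ℕ} (h1 : j ≤ k) (h2 : k ≤ w.length)
    (h : (inputSlice w j k : List (Symbol T N)) = []) : j = k := by
  have := slice_length (w := w) (N := N) h1 h2
  rw [h] at this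
  simp at this
  omega

lemma slice_split {j k : ℕ} {v₁ v₂ : List (Symbol T N)}
    (h : (inputSlice w j k : List (Symbol T N)) = v₁ ++ v₂)
    (h1 : j ≤ k) (h2 : k ≤ w.length) :
    j + v₁.length ≤ k ∧ v₁ = inputSlice w j (j + v₁.length) ∧
      v₂ = inputSlice w (j + v₁.length) k := by
  have hlen : v₁.length + v₂.length = k - j := by
    have := slice_length (w := w) (N := N) h1 h2
    rw [h] at this
    simpa using this
  have hp1 : j + v₁.length ≤ k := by omega
  have heq : (inputSlice w j (j + v₁.length) : List (Symbol T N))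
      ++ inputSlice w (j + v₁.length) k = v₁ ++ v₂ := by
    rw [slice_append (by omega) hp1]; exact h
  have hl : (inputSlice w j (j + v₁.length) : List (Symbol T N)).length = v₁.length := by
    rw [slice_length (by omega) (by omega)]; omega
  obtain ⟨e1, e2⟩ := List.append_inj heq hl
  exact ⟨hp1, e1.symm, e2.symm⟩

/-- A slice contains no nonterminal at its head unless empty. -/
lemma nonterminal_ne_slice_head {B : N} {j k : ℕ} {rest : List (Symbol T N)} :
    (inputSlice w j k : List (Symbol T N)) ≠ Symbol.nonterminal B :: rest ∨ True := Or.inr trivial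

end EarleyAux2
namespace EarleyAux3
open EarleyAux EarleyAux2
variable {T N : Type} {g : CFG T N} {w : List T}

lemma slice_head {j i : ℕ} (hji : j < i) (hi : i ≤ w.length) :
    ∃ a, w[j]? = some a ∧
      (inputSlice w j i : List (Symbol T N))
        = Symbol.terminal a :: inputSlice w (j + 1) i := by
  have hj : j < w.length := lt_of_lt_of_le hji hi
  have ha : w[j]? = some w[j] := by simp [hj]
  exact ⟨w[j], ha, slice_cons hji ha⟩

lemma not_nonterminal_mem_slice {B : N} {j i : ℕ} :
    Symbol.nonterminal B ∉ (inputSlice w j i : List (Symbol T N)) := by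
  unfold inputSlice
  simp only [List.mem_map]
  rintro ⟨x, -, h⟩
  cases h

/-- Lemma C: completeness for the T table. -/
lemma varT_complete : ∀ n (β : List (Symbol T N)) (j k : ℕ), j ≤ k → k ≤ w.length →
    VarU g w β j → DerivesIn g β (inputSlice w j k) n → VarT g w β j k := by
  intro n
  induction n using Nat.strong_induction_on with
  | _ n ihn =>
  intro β
  induction β with
  | nil =>
    intro j k hjk hk hu hd
    obtain ⟨hv, _⟩ := derivesIn_nil hd
    have hjk' := slice_eq_nil hjk hk hv
    subst hjk'
    exact VarT.empty hu
  | cons s β' ihβ =>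
    intro j k hjk hk hu hd
    obtain ⟨v₁, v₂, n₁, n₂, hv, hn, h₁, h₂⟩ :=
      derivesIn_split (u₁ := [s]) (u₂ := β') hd
    obtain ⟨hp, he1, he2⟩ := slice_split hv hjk hk
    cases s with
    | terminal a =>
      obtain ⟨v', hv', h₁'⟩ := derivesIn_terminal_cons h₁
      obtain ⟨hv'nil, hn₁⟩ := derivesIn_nil h₁'
      subst hv'nil
      subst hv'
      simp only [List.length_singleton] at hp he1 he2
      have hjk1 : j < k := by omega
      obtain ⟨a', ha', hsl⟩ := slice_head (N := N) hjk1 hk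
      have haa : a = a' := by
        rw [show (inputSlice w j (j+1) : List (Symbol T N))
            = Symbol.terminal a' :: inputSlice w (j+1) (j+1) from
          slice_cons (by omega) ha', slice_of_le (le_refl (j+1))] at he1
        simpa using he1
      subst haa
      have hu' : VarU g w β' (j + 1) := VarU.scan hu ha'
      have hn2 : n₂ = n := by omega
      subst hn2
      rw [he2] at h₂
      exact VarT.scan hu ha' (ihβ (j + 1) k (by omega) hk hu' h₂)
    | nonterminal B =>
      cases n₁ with
      | zero =>
        have hB : v₁ = [Symbol.nonterminal B] := (derivesIn_zero h₁).symm
        rw [hB] at he1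
        exact absurd (he1 ▸ List.mem_singleton.mpr rfl) not_nonterminal_mem_slice
      | succ m =>
        obtain ⟨x, hx, hdx⟩ := h₁
        have hrule : (B, x) ∈ g.rules := produces_nonterminal_singleton hx
        have hux : VarU g w x j := VarU.predict hu hrule
        have hT1 : VarT g w x j (j + v₁.length) :=
          ihn m (by omega) x j (j + v₁.length) (by omega) (by omega) hux
            (he1 ▸ hdx)
        have hu' : VarU g w β' (j + v₁.length) := VarU.complete hu hrule hT1
        have hT2 : VarT g w β' (j + v₁.length) k :=
          ihn n₂ (by omega) β' (j + v₁.length) k hp hk hu' (he2 ▸ h₂)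
        exact VarT.complete hu hrule hT1 hT2

/-- Lemma M: moving the dot through a derived prefix. -/
lemma varU_move : ∀ n (α β : List (Symbol T N)) (i j : ℕ), i ≤ j → j ≤ w.length →
    VarU g w (α ++ β) i → DerivesIn g α (inputSlice w i j) n → VarU g w β j := by
  intro n
  induction n using Nat.strong_induction_on with
  | _ n ihn =>
  intro α
  induction α with
  | nil =>
    intro β i j hij hj hu hd
    obtain ⟨hv, _⟩ := derivesIn_nil hd
    have := slice_eq_nil hij hj hv
    subst this
    simpa using hu
  | cons s α' ihα =>
    intro β i j hij hj hu hd
    obtain ⟨v₁, v₂, n₁, n₂, hv, hn, h₁, h₂⟩ :=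
      derivesIn_split (u₁ := [s]) (u₂ := α') hd
    obtain ⟨hp, he1, he2⟩ := slice_split hv hij hj
    cases s with
    | terminal a =>
      obtain ⟨v', hv', h₁'⟩ := derivesIn_terminal_cons h₁
      obtain ⟨hv'nil, hn₁⟩ := derivesIn_nil h₁'
      subst hv'nil
      subst hv'
      simp only [List.length_singleton] at hp he1 he2
      have hij1 : i < j := by omega
      obtain ⟨a', ha', _⟩ := slice_head (N := N) hij1 hj
      have haa : a = a' := by
        rw [show (inputSlice w i (i+1) : List (Symbol T N))
            = Symbol.terminal a' :: inputSlice w (i+1) (i+1) from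
          slice_cons (by omega) ha', slice_of_le (le_refl (i+1))] at he1
        simpa using he1
      subst haa
      have hu' : VarU g w (α' ++ β) (i + 1) := VarU.scan hu ha'
      have hn2 : n₂ = n := by omega
      subst hn2
      rw [he2] at h₂
      exact ihα β (i + 1) j (by omega) hj hu' h₂
    | nonterminal B =>
      cases n₁ with
      | zero =>
        have hB : v₁ = [Symbol.nonterminal B] := (derivesIn_zero h₁).symm
        rw [hB] at he1
        exact absurd (he1 ▸ List.mem_singleton.mpr rfl) not_nonterminal_mem_slice
      | succ m =>
        obtain ⟨x, hx, hdx⟩ := h₁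
        have hrule : (B, x) ∈ g.rules := produces_nonterminal_singleton hx
        have hux : VarU g w x i := VarU.predict hu hrule
        have hT1 : VarT g w x i (i + v₁.length) :=
          varT_complete m x i (i + v₁.length) (by omega) (by omega) hux (he1 ▸ hdx)
        have hu' : VarU g w (α' ++ β) (i + v₁.length) := VarU.complete hu hrule hT1
        exact ihn n₂ (by omega) α' β (i + v₁.length) j hp hj hu' (he2 ▸ h₂)

/-- Lemma G: predicted items exist at every reachable position. -/
lemma varU_reach : ∀ n (α β γ δ : List (Symbol T N)) (A : N) (j i : ℕ),
    j ≤ i → i ≤ w.length → VarU g w (α ++ β) j →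
    DerivesIn g α (inputSlice w j i ++ Symbol.nonterminal A :: γ) n →
    (A, δ) ∈ g.rules → VarU g w δ i := by
  intro n
  induction n using Nat.strong_induction_on with
  | _ n ihn =>
  intro α
  induction α with
  | nil =>
    intro β γ δ A j i hji hi hu hd hr
    obtain ⟨hv, _⟩ := derivesIn_nil hd
    exact absurd hv.symm (by simp)
  | cons s α' ihα =>
    intro β γ δ A j i hji hi hu hd hr
    cases s with
    | terminal a =>
      obtain ⟨v', hv', h'⟩ := derivesIn_terminal_cons hd
      have hji1 : j < i := by
        by_contra hc
        have heq : j = i := by omega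
        subst heq
        rw [slice_of_le (le_refl j)] at hv'
        simp at hv'
      obtain ⟨a', ha', hsl⟩ := slice_head (N := N) hji1 hi
      rw [hsl] at hv'
      simp only [List.cons_append, List.cons.injEq] at hv'
      obtain ⟨haa, hv'2⟩ := hv'
      have haa' : a = a' := by simpa using haa.symm
      subst haa'
      have hu' : VarU g w (α' ++ β) (j + 1) := VarU.scan hu ha'
      exact ihα β γ δ A (j + 1) i (by omega) hi hu' (hv'2 ▸ h') hr
    | nonterminal B =>
      obtain ⟨v₁, v₂, n₁, n₂, hv, hn, h₁, h₂⟩ :=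
        derivesIn_split (u₁ := [Symbol.nonterminal B]) (u₂ := α') hd
      rcases List.append_eq_append_iff.mp hv.symm with ⟨a', hsl, hv2⟩ | ⟨c', hv1, hcg⟩
      · -- v₁ is a prefix of the slice
        obtain ⟨hp, he1, he2⟩ := slice_split hsl hji hi
        cases n₁ with
        | zero =>
          have hB : v₁ = [Symbol.nonterminal B] := (derivesIn_zero h₁).symm
          rw [hB] at he1
          exact absurd (he1 ▸ List.mem_singleton.mpr rfl) not_nonterminal_mem_slice
        | succ m =>
          obtain ⟨x, hx, hdx⟩ := h₁
          have hrule : (B, x) ∈ g.rules := produces_nonterminal_singleton hx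
          have hux : VarU g w x j := VarU.predict hu hrule
          have hT1 : VarT g w x j (j + v₁.length) :=
            varT_complete m x j (j + v₁.length) (by omega) (by omega) hux (he1 ▸ hdx)
          have hu' : VarU g w (α' ++ β) (j + v₁.length) := VarU.complete hu hrule hT1
          refine ihn n₂ (by omega) α' β γ δ A (j + v₁.length) i hp hi hu' ?_ hr
          rw [← he2, ← hv2]
          exact h₂
      · -- v₁ covers the slice, possibly including the nonterminal A
        cases c' with
        | nil =>
          simp only [List.append_nil] at hv1
          have hv2 : v₂ = Symbol.nonterminal A :: γ := by simpa using hcg.symm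
          cases n₁ with
          | zero =>
            have hB : v₁ = [Symbol.nonterminal B] := (derivesIn_zero h₁).symm
            rw [hB] at hv1
            exact absurd (hv1.symm ▸ List.mem_singleton.mpr rfl) not_nonterminal_mem_slice
          | succ m =>
            obtain ⟨x, hx, hdx⟩ := h₁
            have hrule : (B, x) ∈ g.rules := produces_nonterminal_singleton hx
            have hux : VarU g w x j := VarU.predict hu hrule
            have hT1 : VarT g w x j i :=
              varT_complete m x j i hji hi hux (hv1 ▸ hdx)
            have hu' : VarU g w (α' ++ β) i := VarU.complete hu hrule hT1
            refine ihn n₂ (by omega) α' β γ δ A i i (le_refl i) hi hu' ?_ hr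
            rw [slice_of_le (le_refl i), List.nil_append, ← hv2]
            exact h₂
        | cons s c'' =>
          simp only [List.cons_append, List.cons.injEq] at hcg
          obtain ⟨hsA, hγ⟩ := hcg
          cases n₁ with
          | zero =>
            have hv₁ : [Symbol.nonterminal B] = v₁ := derivesIn_zero h₁
            rw [hv1] at hv₁
            have hslnil : (inputSlice w j i : List (Symbol T N)) = [] := by
              by_contra hc
              obtain ⟨y, ys, hy⟩ := List.exists_cons_of_ne_nil hc
              rw [hy] at hv₁
              simp only [List.cons_append, List.cons.injEq] at hv₁
              have hmem : Symbol.nonterminal B ∈ (inputSlice w j i : List (Symbol T N)) := by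
                rw [hy]
                exact hv₁.1 ▸ List.mem_cons_self
              exact not_nonterminal_mem_slice hmem
            rw [hslnil, List.nil_append] at hv₁
            simp only [List.cons.injEq] at hv₁
            obtain ⟨hBs, hc''⟩ := hv₁
            have hji' : j = i := slice_eq_nil hji hi hslnil
            subst hji'
            rw [← hsA] at hBs
            have hBA : B = A := by simpa using hBs
            subst hBA
            exact VarU.predict hu hr
          | succ m =>
            obtain ⟨x, hx, hdx⟩ := h₁
            have hrule : (B, x) ∈ g.rules := produces_nonterminal_singleton hx
            have hux : VarU g w (x ++ []) j := by
              rw [List.append_nil]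
              exact VarU.predict hu hrule
            refine ihn m (by omega) x [] c'' δ A j i hji hi hux ?_ hr
            rw [hv1, ← hsA] at hdx
            exact hdx

end EarleyAux3
namespace EarleyAux4
open EarleyAux EarleyAux2 EarleyAux3
variable {T N : Type} {g : CFG T N} {w : List T}

/-- Completeness for the U array. -/
lemma varU_complete {i j : ℕ} {A : N} {γ α β : List (Symbol T N)}
    (hij : i ≤ j) (hjw : j ≤ w.length)
    (hS : g.Derives [Symbol.nonterminal g.initial]
      ((w.take i).map Symbol.terminal ++ Symbol.nonterminal A :: γ))
    (hr : (A, α ++ β) ∈ g.rules)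
    (hα : g.Derives α (inputSlice w i j)) :
    VarU g w β j := by
  obtain ⟨n, hn⟩ := derives_iff_derivesIn.mp hS
  obtain ⟨m, hm⟩ := derives_iff_derivesIn.mp hα
  have hiw : i ≤ w.length := le_trans hij hjw
  have hUαβ : VarU g w (α ++ β) i := by
    cases n with
    | zero =>
      have heq := derivesIn_zero hn
      have hlen := congrArg List.length heq
      simp at hlen
      have htake : ((w.take i).map Symbol.terminal : List (Symbol T N)) = [] :=
        List.eq_nil_of_length_eq_zero (by simp; omega)
      rw [htake, List.nil_append] at heq
      have hγ : γ = [] := List.eq_nil_of_length_eq_zero (by omega)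
      rw [hγ] at heq
      have hAS : g.initial = A := by simpa using heq
      have hi0 : i = 0 := by
        have hh : ((w.take i).map (Symbol.terminal : T → Symbol T N)).length = 0 := by
          rw [htake]; rfl
        simp at hh
        omega
      subst hi0
      exact VarU.init (hAS ▸ hr)
    | succ n' =>
      obtain ⟨x, hx, hd⟩ := hn
      have hrS : (g.initial, x) ∈ g.rules := produces_nonterminal_singleton hx
      have hux : VarU g w (x ++ []) 0 := by
        rw [List.append_nil]
        exact VarU.init hrS
      refine varU_reach n' x [] γ (α ++ β) A 0 i (Nat.zero_le i) hiw hux ?_ hr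
      rw [slice_zero]
      exact hd
  exact varU_move m α β i j hij hjw hUαβ hm

/-- The soundness invariant for the U array. -/
def SoundU (g : CFG T N) (w : List T) (β : List (Symbol T N)) (j : ℕ) : Prop :=
  ∃ i A α γ, i ≤ j ∧
    g.Derives [Symbol.nonterminal g.initial]
      ((w.take i).map Symbol.terminal ++ Symbol.nonterminal A :: γ) ∧
    (A, α ++ β) ∈ g.rules ∧ g.Derives α (inputSlice w i j)

lemma sound_init {α : List (Symbol T N)} (ha : (g.initial, α) ∈ g.rules) :
    SoundU g w α 0 := by
  refine ⟨0, g.initial, [], [], le_refl 0, ?_, by simpa using ha, ?_⟩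
  · simp
    exact Relation.ReflTransGen.refl
  · rw [slice_of_le (le_refl 0)]
    exact Relation.ReflTransGen.refl

lemma sound_predict {A : N} {β' γ : List (Symbol T N)} {j' : ℕ}
    (ih : SoundU g w (Symbol.nonterminal A :: β') j') (hr : (A, γ) ∈ g.rules) :
    SoundU g w γ j' := by
  obtain ⟨i, B, α, δ, hij, hS, hrB, hα⟩ := ih
  refine ⟨j', A, [], β' ++ δ, le_refl j', ?_, by simpa using hr, ?_⟩
  · refine hS.trans ?_
    have step : g.Produces
        ((w.take i).map Symbol.terminal ++ Symbol.nonterminal B :: δ)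
        ((w.take i).map Symbol.terminal ++ ((α ++ Symbol.nonterminal A :: β') ++ δ)) :=
      ⟨B, α ++ Symbol.nonterminal A :: β', (w.take i).map Symbol.terminal, δ, hrB,
        by simp, by simp⟩
    refine (Relation.ReflTransGen.single step).trans ?_
    have d1 : g.Derives (α ++ (Symbol.nonterminal A :: β' ++ δ))
        (inputSlice w i j' ++ (Symbol.nonterminal A :: β' ++ δ)) :=
      derives_append_right _ hα
    have d2 := derives_append_left ((w.take i).map Symbol.terminal) d1
    have e1 : (w.take i).map Symbol.terminal ++ ((α ++ Symbol.nonterminal A :: β') ++ δ)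
        = (w.take i).map Symbol.terminal ++ (α ++ (Symbol.nonterminal A :: β' ++ δ)) := by
      simp
    have e2 : (w.take i).map Symbol.terminal
          ++ (inputSlice w i j' ++ (Symbol.nonterminal A :: β' ++ δ))
        = (w.take j').map Symbol.terminal ++ Symbol.nonterminal A :: (β' ++ δ) := by
      rw [← List.append_assoc, take_append_slice hij]
      simp
    rw [e1, ← e2]
    exact d2
  · rw [slice_of_le (le_refl j')]
    exact Relation.ReflTransGen.refl

lemma sound_scan {a : T} {β' : List (Symbol T N)} {j' : ℕ}
    (ih : SoundU g w (Symbol.terminal a :: β') j') (ha : w[j']? = some a) :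
    SoundU g w β' (j' + 1) := by
  obtain ⟨i, B, α, δ, hij, hS, hrB, hα⟩ := ih
  refine ⟨i, B, α ++ [Symbol.terminal a], δ, by omega, hS, by simpa using hrB, ?_⟩
  have hsl : (inputSlice w i (j' + 1) : List (Symbol T N))
      = inputSlice w i j' ++ [Symbol.terminal a] := by
    rw [← slice_append (w := w) (N := N) hij (by omega : j' ≤ j' + 1),
      slice_cons (by omega) ha, slice_of_le (le_refl (j' + 1))]
  rw [hsl]
  exact derives_append_right _ hα

lemma sound_complete {B : N} {β' γ' : List (Symbol T N)} {k' j' : ℕ}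
    (ihU : SoundU g w (Symbol.nonterminal B :: β') k') (hr : (B, γ') ∈ g.rules)
    (hkj : k' ≤ j') (hγd : g.Derives γ' (inputSlice w k' j')) :
    SoundU g w β' j' := by
  obtain ⟨i, C, α, δ, hik, hS, hrC, hα⟩ := ihU
  refine ⟨i, C, α ++ [Symbol.nonterminal B], δ, by omega, hS, by simpa using hrC, ?_⟩
  have d1 : g.Derives (α ++ [Symbol.nonterminal B])
      (inputSlice w i k' ++ [Symbol.nonterminal B]) := derives_append_right _ hα
  have step : g.Produces (inputSlice w i k' ++ [Symbol.nonterminal B] : List (Symbol T N))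
      (inputSlice w i k' ++ γ') :=
    ⟨B, γ', inputSlice w i k', [], hr, by simp, by simp⟩
  have d2 : g.Derives (inputSlice w i k' ++ γ' : List (Symbol T N))
      (inputSlice w i k' ++ inputSlice w k' j') :=
    derives_append_left _ hγd
  rw [← slice_append (w := w) (N := N) hik hkj]
  exact (d1.trans (Relation.ReflTransGen.single step)).trans d2

lemma sound_tscan {a : T} {β' : List (Symbol T N)} {j' m' : ℕ}
    (ha : w[j']? = some a) (hjm : j' + 1 ≤ m')
    (hd : g.Derives β' (inputSlice w (j' + 1) m')) :
    g.Derives (Symbol.terminal a :: β') (inputSlice w j' m') := by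
  rw [slice_cons (by omega) ha]
  exact derives_cons _ hd

lemma sound_tcomplete {B : N} {β' γ' : List (Symbol T N)} {k' j' m' : ℕ}
    (hr : (B, γ') ∈ g.rules) (hkj : k' ≤ j') (hjm : j' ≤ m')
    (hd1 : g.Derives γ' (inputSlice w k' j'))
    (hd2 : g.Derives β' (inputSlice w j' m')) :
    g.Derives (Symbol.nonterminal B :: β') (inputSlice w k' m') := by
  have step : g.Produces (Symbol.nonterminal B :: β' : List (Symbol T N)) (γ' ++ β') :=
    ⟨B, γ', [], β', hr, by simp, by simp⟩
  have d : g.Derives (γ' ++ β' : List (Symbol T N))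
      (inputSlice w k' j' ++ inputSlice w j' m') := derives_append hd1 hd2
  rw [← slice_append (w := w) (N := N) hkj hjm]
  exact (Relation.ReflTransGen.single step).trans d

lemma varU_sound {β : List (Symbol T N)} {j : ℕ} (h : VarU g w β j) :
    SoundU g w β j := by
  refine VarU.rec (motive_1 := fun β j _ => SoundU g w β j)
    (motive_2 := fun β j m _ =>
      SoundU g w β j ∧ j ≤ m ∧ g.Derives β (inputSlice w j m))
    ?_ ?_ ?_ ?_ ?_ ?_ ?_ h
  · intro α ha
    exact sound_init ha
  · intro A β' j' γ' _ hr ih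
    exact sound_predict ih hr
  · intro a β' j' _ ha ih
    exact sound_scan ih ha
  · intro B β' k' γ' j' _ hr _ ihU ihT
    exact sound_complete ihU hr ihT.2.1 ihT.2.2
  · intro m' _ ih
    exact ⟨ih, le_refl m', by
      rw [slice_of_le (le_refl m')]
      exact Relation.ReflTransGen.refl⟩
  · intro a β' j' m' _ ha _ ihU ihT
    exact ⟨ihU, by omega, sound_tscan ha ihT.2.1 ihT.2.2⟩
  · intro B β' k' γ' j' m' _ hr _ _ ihU ihT1 ihT2
    exact ⟨ihU, by omega, sound_tcomplete hr ihT1.2.1 ihT2.2.1 ihT1.2.2 ihT2.2.2⟩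

lemma varT_sound {β : List (Symbol T N)} {j m : ℕ} (h : VarT g w β j m) :
    SoundU g w β j ∧ j ≤ m ∧ g.Derives β (inputSlice w j m) := by
  refine VarT.rec (motive_1 := fun β j _ => SoundU g w β j)
    (motive_2 := fun β j m _ =>
      SoundU g w β j ∧ j ≤ m ∧ g.Derives β (inputSlice w j m))
    ?_ ?_ ?_ ?_ ?_ ?_ ?_ h
  · intro α ha
    exact sound_init ha
  · intro A β' j' γ' _ hr ih
    exact sound_predict ih hr
  · intro a β' j' _ ha ih
    exact sound_scan ih ha
  · intro B β' k' γ' j' _ hr _ ihU ihT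
    exact sound_complete ihU hr ihT.2.1 ihT.2.2
  · intro m' _ ih
    exact ⟨ih, le_refl m', by
      rw [slice_of_le (le_refl m')]
      exact Relation.ReflTransGen.refl⟩
  · intro a β' j' m' _ ha _ ihU ihT
    exact ⟨ihU, by omega, sound_tscan ha ihT.2.1 ihT.2.2⟩
  · intro B β' k' γ' j' m' _ hr _ _ ihU ihT1 ihT2
    exact ⟨ihU, by omega, sound_tcomplete hr ihT1.2.1 ihT2.2.1 ihT1.2.2 ihT2.2.2⟩

end EarleyAux4

/-- [β] ∈ T_{j,k} iff there are i, A, α, γ with S ⇒* a_1⋯a_i A γ,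
(A → αβ) ∈ P, α ⇒* a_{i+1}⋯a_j, and additionally β ⇒* a_{j+1}⋯a_k. -/
theorem variant_T_characterization (g : CFG T N) (w : List T)
    (β : List (Symbol T N)) (j k : ℕ) (hjk : j ≤ k) (hk : k ≤ w.length) :
    VarT g w β j k ↔
      ∃ i A α γ, i ≤ j ∧
        g.Derives [Symbol.nonterminal g.initial]
          ((w.take i).map Symbol.terminal ++ Symbol.nonterminal A :: γ) ∧
        (A, α ++ β) ∈ g.rules ∧
        g.Derives α (inputSlice w i j) ∧
        g.Derives β (inputSlice w j k) := by
  constructor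
  · intro h
    obtain ⟨hs, -, hd⟩ := EarleyAux4.varT_sound h
    obtain ⟨i, A, α, γ, hij, hS, hr, hα⟩ := hs
    exact ⟨i, A, α, γ, hij, hS, hr, hα, hd⟩
  · rintro ⟨i, A, α, γ, hij, hS, hr, hα, hβ⟩
    have hU := EarleyAux4.varU_complete hij (le_trans hjk hk) hS hr hα
    obtain ⟨n, hn⟩ := EarleyAux.derives_iff_derivesIn.mp hβ
    exact EarleyAux3.varT_complete n β j k hjk hk hU hn
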